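/- Let R be a commutative Noetherian ring, x_1,...,x_d a regular R-sequence in the Jacobson radical of R with (x_1,...,x_d)R prime, and let I be a squarefree monomial ideal. Then I equals the intersection of the minimal primes of I. -/

import Mathlib

open Ideal

section MRegBasics
variable {R S : Type*} [CommRing R] [CommRing S]

/-- Elementary reformulation of weak regularity of a sequence in `R`. -/
def MReg (l : List R) : Prop :=
  ∀ (i : ℕ) (h : i < l.length) (r : R),
    l[i] * r ∈ Ideal.ofList (l.take i) → r ∈ Ideal.ofList (l.take i)

lemma smul_top_eq_self (I : Ideal R) : (I • ⊤ : Submodule R R) = I := by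
  rw [smul_eq_mul, mul_top]

lemma isSMulRegular_quot_iff (p : Submodule R R) (c : R) :
    IsSMulRegular (R ⧸ p) c ↔ ∀ r : R, c * r ∈ p → r ∈ p := by
  constructor
  · intro h r hr
    have h0 : c • (Submodule.Quotient.mk r : R ⧸ p) = c • (0 : R ⧸ p) := by
      rw [smul_zero, ← Submodule.Quotient.mk_smul, smul_eq_mul,
        Submodule.Quotient.mk_eq_zero]
      exact hr
    have := h h0
    rwa [Submodule.Quotient.mk_eq_zero] at this
  · intro h a b hab
    obtain ⟨r, rfl⟩ := Submodule.Quotient.mk_surjective p a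
    obtain ⟨s, rfl⟩ := Submodule.Quotient.mk_surjective p b
    simp only [← Submodule.Quotient.mk_smul, smul_eq_mul, Submodule.Quotient.eq, ← mul_sub] at hab
    rw [Submodule.Quotient.eq]
    exact h _ hab

lemma mreg_iff_isWeaklyRegular (l : List R) :
    MReg l ↔ RingTheory.Sequence.IsWeaklyRegular R l := by
  rw [RingTheory.Sequence.isWeaklyRegular_iff]
  refine forall_congr' fun i => forall_congr' fun h => ?_
  rw [smul_top_eq_self, isSMulRegular_quot_iff]

lemma MReg.perm [IsNoetherianRing R] {l l' : List R} (h : MReg l) (hp : l.Perm l')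
    (hj : ∀ r ∈ l, r ∈ Ideal.jacobson (⊥ : Ideal R)) : MReg l' := by
  rw [mreg_iff_isWeaklyRegular] at h ⊢
  exact h.of_perm_of_subset_jacobson_annihilator hp
    (fun r hr => Ideal.jacobson_mono bot_le (hj r hr))

lemma MReg.prefix {l₁ l₂ : List R} (h : MReg (l₁ ++ l₂)) : MReg l₁ := by
  intro i hi r hr
  have hi' : i < (l₁ ++ l₂).length := by
    rw [List.length_append]; omega
  have e1 : (l₁ ++ l₂)[i]'hi' = l₁[i] := List.getElem_append_left hi
  have e2 : (l₁ ++ l₂).take i = l₁.take i := by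
    rw [List.take_append, Nat.sub_eq_zero_of_le (le_of_lt hi),
      List.take_zero, List.append_nil]
  have := h i hi' r (by rw [e1, e2]; exact hr)
  rwa [e2] at this

end MRegBasics
section MRegQuot
variable {R : Type*} [CommRing R]

lemma MReg.quot {l₁ l₂ : List R} {I : Ideal R} (hI : I = Ideal.ofList l₁)
    (h : MReg (l₁ ++ l₂)) : MReg (l₂.map (Ideal.Quotient.mk I)) := by
  subst hI
  intro i hi ρ hρ
  rw [List.length_map] at hi
  obtain ⟨r, rfl⟩ := Ideal.Quotient.mk_surjective ρ
  have e0 : (l₂.map (Ideal.Quotient.mk (Ideal.ofList l₁)))[i]'(by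
      rw [List.length_map]; exact hi) = Ideal.Quotient.mk (Ideal.ofList l₁) l₂[i] := by
    simp
  have e1 : Ideal.ofList ((l₂.map (Ideal.Quotient.mk (Ideal.ofList l₁))).take i)
      = Ideal.map (Ideal.Quotient.mk (Ideal.ofList l₁)) (Ideal.ofList (l₂.take i)) := by
    rw [Ideal.map_ofList, List.map_take]
  have e2 : Ideal.ofList ((l₁ ++ l₂).take (l₁.length + i)) =
      Ideal.ofList (l₂.take i) ⊔ Ideal.ofList l₁ := by
    rw [List.take_append, List.take_of_length_le (by omega),
      Nat.add_sub_cancel_left, Ideal.ofList_append, sup_comm]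
  have hi' : l₁.length + i < (l₁ ++ l₂).length := by rw [List.length_append]; omega
  have e3 : (l₁ ++ l₂)[l₁.length + i]'hi' = l₂[i] := by
    rw [List.getElem_append_right (by omega)]
    congr 1
    omega
  rw [e0, e1, ← _root_.map_mul, Ideal.mem_quotient_iff_mem_sup, ← e2] at hρ
  have := h (l₁.length + i) hi' r (by rw [e3]; exact hρ)
  rw [e2] at this
  rw [e1, Ideal.mem_quotient_iff_mem_sup]
  exact this

lemma MReg.head {a : R} {l : List R} (h : MReg (a :: l)) {r : R} (har : a * r = 0) :
    r = 0 := by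
  have := h 0 (by simp) r (by simpa using har)
  simpa using this

lemma jac_quot {I : Ideal R} {r : R}
    (hr : r ∈ Ideal.jacobson (⊥ : Ideal R)) :
    Ideal.Quotient.mk I r ∈ Ideal.jacobson (⊥ : Ideal (R ⧸ I)) := by
  have h := Ideal.map_jacobson_of_surjective (I := I)
    (f := Ideal.Quotient.mk I) Ideal.Quotient.mk_surjective
    (le_of_eq Ideal.mk_ker)
  rw [Ideal.map_quotient_self] at h
  rw [← h]
  exact Ideal.mem_map_of_mem _ (Ideal.jacobson_mono bot_le hr)

end MRegQuot
section Monomial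
open Pointwise
variable {R S : Type*} [CommRing R] [CommRing S] {ι : Type*} [DecidableEq ι]

/-- The monomial ideal attached to a family of "variables" and a set of supports. -/
def mIdeal (x : ι → R) (T : Set (Finset ι)) : Ideal R :=
  Ideal.span ((fun s => ∏ i ∈ s, x i) '' T)

lemma mIdeal_mono (x : ι → R) {T T' : Set (Finset ι)} (h : T ⊆ T') :
    mIdeal x T ≤ mIdeal x T' :=
  Ideal.span_mono (Set.image_mono h)

lemma mIdeal_union (x : ι → R) (T T' : Set (Finset ι)) :
    mIdeal x (T ∪ T') = mIdeal x T ⊔ mIdeal x T' := by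
  rw [mIdeal, Set.image_union, Ideal.span_union]; rfl

lemma mIdeal_map (f : R →+* S) (x : ι → R) (T : Set (Finset ι)) :
    Ideal.map f (mIdeal x T) = mIdeal (fun i => f (x i)) T := by
  rw [mIdeal, Ideal.map_span, ← Set.image_comp]
  congr 1
  ext s
  simp [map_prod]

lemma mIdeal_decomp (x : ι → R) (i₀ : ι) (T : Set (Finset ι)) :
    mIdeal x T = mIdeal x {s ∈ T | i₀ ∉ s} ⊔
      Ideal.span {x i₀} * mIdeal x ((fun s => s.erase i₀) '' {s ∈ T | i₀ ∈ s}) := by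
  refine le_antisymm (Ideal.span_le.2 ?_) (sup_le ?_ ?_)
  · rintro - ⟨s, hs, rfl⟩
    dsimp only
    by_cases h0 : i₀ ∈ s
    · refine Ideal.mem_sup_right ?_
      rw [← Finset.mul_prod_erase s x h0]
      exact Ideal.mul_mem_mul (Ideal.subset_span rfl)
        (Ideal.subset_span ⟨s.erase i₀, ⟨s, ⟨hs, h0⟩, rfl⟩, rfl⟩)
    · exact Ideal.mem_sup_left (Ideal.subset_span ⟨s, ⟨hs, h0⟩, rfl⟩)
  · exact mIdeal_mono x (fun s hs => hs.1)
  · rw [mIdeal, Ideal.span_mul_span]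
    refine Ideal.span_le.2 ?_
    rintro z hz
    simp only [Set.mem_mul, Set.mem_singleton_iff] at hz
    obtain ⟨a, ha, b, hb, rfl⟩ := hz
    subst ha
    obtain ⟨t, ⟨s, ⟨hs, h0⟩, rfl⟩, rfl⟩ := hb
    dsimp only
    rw [Finset.mul_prod_erase s x h0]
    exact Ideal.subset_span ⟨s, hs, rfl⟩

end Monomial
section Perms
variable {R : Type*} [CommRing R] {ι : Type*} [DecidableEq ι]

lemma toList_perm_cons_erase (u : Finset ι) {i₀ : ι} (h : i₀ ∈ u) :
    u.toList.Perm (i₀ :: (u.erase i₀).toList) := by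
  rw [← Multiset.coe_eq_coe, ← Multiset.cons_coe, Finset.coe_toList, Finset.coe_toList,
    Finset.erase_val]
  exact (Multiset.cons_erase (Finset.mem_def.1 h)).symm

lemma toList_perm_sdiff (u F : Finset ι) (h : F ⊆ u) :
    u.toList.Perm (F.toList ++ (u \ F).toList) := by
  rw [← Multiset.coe_eq_coe, ← Multiset.coe_add, Finset.coe_toList, Finset.coe_toList,
    Finset.coe_toList, Finset.sdiff_val]
  exact (add_tsub_cancel_of_le (Finset.val_le_iff.2 h)).symm

/-- Permutation of the variable list isolating one variable at the head. -/
lemma map_toList_perm (x : ι → R) (u : Finset ι) {i₀ : ι} (h : i₀ ∈ u) :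
    (u.toList.map x).Perm (x i₀ :: ((u.erase i₀).toList.map x)) :=
  (toList_perm_cons_erase u h).map x

lemma jac_list {x : ι → R} {u : Finset ι} (hjac : ∀ i ∈ u, x i ∈ Ideal.jacobson (⊥ : Ideal R))
    {y : R} (hy : y ∈ Ideal.jacobson (⊥ : Ideal R)) :
    ∀ r ∈ u.toList.map x ++ [y], r ∈ Ideal.jacobson (⊥ : Ideal R) := by
  intro r hr
  rcases List.mem_append.1 hr with hr | hr
  · obtain ⟨i, hi, rfl⟩ := List.mem_map.1 hr
    exact hjac i (Finset.mem_toList.1 hi)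
  · rw [List.mem_singleton.1 hr]; exact hy

lemma jac_list' {x : ι → R} {u : Finset ι} (hjac : ∀ i ∈ u, x i ∈ Ideal.jacobson (⊥ : Ideal R)) :
    ∀ r ∈ u.toList.map x, r ∈ Ideal.jacobson (⊥ : Ideal R) := by
  intro r hr
  obtain ⟨i, hi, rfl⟩ := List.mem_map.1 hr
  exact hjac i (Finset.mem_toList.1 hi)

lemma ofList_toList_map (x : ι → R) (F : Finset ι) :
    Ideal.ofList (F.toList.map x) = Ideal.span (x '' ↑F) := by
  unfold Ideal.ofList
  congr 1
  ext r
  simp only [Set.mem_setOf_eq, List.mem_map, Finset.mem_toList, Set.mem_image,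
    Finset.mem_coe]

end Perms
section LemB

lemma lemB (n : ℕ) : ∀ {R : Type*} [CommRing R] [IsNoetherianRing R]
    {ι : Type*} [DecidableEq ι] (x : ι → R) (u : Finset ι), u.card = n → ∀ y : R,
    MReg (u.toList.map x ++ [y]) →
    (∀ i ∈ u, x i ∈ Ideal.jacobson ⊥) → y ∈ Ideal.jacobson ⊥ →
    ∀ T : Set (Finset ι), (∀ s ∈ T, s ⊆ u) →
    ∀ c : R, y * c ∈ mIdeal x T → c ∈ mIdeal x T := by
  induction n with
  | zero =>
    intro R _ _ ι _ x u hu y hreg hjac hy T hT c hc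
    rw [Finset.card_eq_zero] at hu
    subst hu
    by_cases h0 : ∅ ∈ T
    · have h1 : (1 : R) ∈ mIdeal x T := Ideal.subset_span ⟨∅, h0, by simp⟩
      simpa using Ideal.mul_mem_left _ c h1
    · have hTe : T = ∅ := by
        ext s
        simp only [Set.mem_empty_iff_false, iff_false]
        intro hs
        exact h0 (Finset.subset_empty.1 (hT s hs) ▸ hs)
      have hbot : mIdeal x T = ⊥ := by
        rw [hTe, mIdeal, Set.image_empty, Ideal.span_empty]
      rw [hbot, Ideal.mem_bot] at hc ⊢
      have hreg' : MReg [y] := by simpa using hreg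
      exact MReg.head (l := []) hreg' hc
  | succ n IH =>
    intro R _ _ ι _ x u hu y hreg hjac hy T hT c hc
    obtain ⟨i₀, hi₀⟩ : u.Nonempty := Finset.card_pos.1 (by omega)
    set a := x i₀ with ha
    set u' := u.erase i₀ with hu'def
    set T₀ : Set (Finset ι) := {s ∈ T | i₀ ∉ s} with hT₀def
    set T₁ : Set (Finset ι) := (fun s => s.erase i₀) '' {s ∈ T | i₀ ∈ s} with hT₁def
    have hM : mIdeal x T = mIdeal x T₀ ⊔ Ideal.span {a} * mIdeal x T₁ :=
      mIdeal_decomp x i₀ T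
    have hT₀ : ∀ s ∈ T₀, s ⊆ u' := fun s hs => Finset.subset_erase.2 ⟨hT s hs.1, hs.2⟩
    have hT₁ : ∀ s ∈ T₁, s ⊆ u' := by
      rintro - ⟨s, ⟨hsT, _⟩, rfl⟩
      exact Finset.erase_subset_erase i₀ (hT s hsT)
    have hu' : u'.card = n := by
      rw [hu'def, Finset.card_erase_of_mem hi₀, hu]; rfl
    have hjac' : ∀ i ∈ u', x i ∈ Ideal.jacobson ⊥ :=
      fun i hi => hjac i (Finset.mem_of_mem_erase hi)
    have hjl : ∀ r ∈ u.toList.map x ++ [y], r ∈ Ideal.jacobson (⊥ : Ideal R) :=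
      jac_list hjac hy
    have hp0 : (u.toList.map x).Perm (a :: u'.toList.map x) := map_toList_perm x u hi₀
    have hreg1 : MReg (a :: (u'.toList.map x ++ [y])) :=
      hreg.perm (hp0.append_right [y]) hjl
    have hrega : MReg (u'.toList.map x ++ [a]) :=
      ((hreg.perm ((hp0.trans (List.perm_append_singleton a _).symm).append_right [y])
        hjl)).prefix
    have hregy : MReg (u'.toList.map x ++ [y]) := by
      have hperm2 : (u.toList.map x ++ [y]).Perm ((u'.toList.map x ++ [y]) ++ [a]) :=
        (hp0.append_right [y]).trans (List.perm_append_singleton a _).symm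
      exact (hreg.perm hperm2 hjl).prefix
    -- quotient ring
    set mk := Ideal.Quotient.mk (Ideal.span {a}) with hmkdef
    have hq' : MReg (u'.toList.map (fun i => mk (x i)) ++ [mk y]) := by
      have := MReg.quot (l₁ := [a]) (l₂ := u'.toList.map x ++ [y])
        (Ideal.ofList_singleton a).symm hreg1
      simpa [List.map_map, Function.comp_def] using this
    have hcq : mk y * mk c ∈ mIdeal (fun i => mk (x i)) T₀ := by
      have h1 : mk (y * c) ∈ Ideal.map mk (mIdeal x T) := Ideal.mem_map_of_mem _ hc
      rw [hM, Ideal.map_sup, Ideal.map_mul, Ideal.map_quotient_self, bot_mul,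
        sup_bot_eq, mIdeal_map] at h1
      rw [← _root_.map_mul]
      exact h1
    have hcq2 := IH (fun i => mk (x i)) u' hu' (mk y) hq'
      (fun i hi => jac_quot (hjac' i hi)) (jac_quot hy) T₀ hT₀ (mk c) hcq
    rw [← mIdeal_map mk, Ideal.mem_quotient_iff_mem_sup] at hcq2
    obtain ⟨j, hj, z, hz, hjz⟩ := Submodule.mem_sup.1 hcq2
    obtain ⟨u₁, hu₁⟩ := Ideal.mem_span_singleton'.1 hz
    -- step (iii)
    have h3 : a * (y * u₁) ∈ mIdeal x T₀ ⊔ Ideal.span {a} * mIdeal x T₁ := by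
      have he : a * (y * u₁) = y * c - y * j := by
        rw [← hjz, ← hu₁]; ring
      rw [he]
      exact Submodule.sub_mem _ (hM ▸ hc) (Ideal.mem_sup_left (Ideal.mul_mem_left _ y hj))
    obtain ⟨j', hj', z', hz', hjz'⟩ := Submodule.mem_sup.1 h3
    obtain ⟨k, hk, hak⟩ := Ideal.mem_span_singleton_mul.1 hz'
    have h4 : a * (y * u₁ - k) ∈ mIdeal x T₀ := by
      have he : a * (y * u₁ - k) = j' := by rw [mul_sub, ← hjz', hak]; ring
      rw [he]; exact hj'
    have h5 : y * u₁ - k ∈ mIdeal x T₀ :=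
      IH x u' hu' a hrega hjac' (hjac i₀ hi₀) T₀ hT₀ _ h4
    have h6 : y * u₁ ∈ mIdeal x (T₀ ∪ T₁) := by
      rw [mIdeal_union]
      have he : y * u₁ = (y * u₁ - k) + k := by ring
      rw [he]
      exact Submodule.add_mem _ (Ideal.mem_sup_left h5) (Ideal.mem_sup_right hk)
    have h7 : u₁ ∈ mIdeal x (T₀ ∪ T₁) :=
      IH x u' hu' y hregy hjac' hy (T₀ ∪ T₁)
        (fun s hs => hs.elim (hT₀ s) (hT₁ s)) u₁ h6
    rw [mIdeal_union] at h7
    obtain ⟨j₂, hj₂, k₂, hk₂, hu₁s⟩ := Submodule.mem_sup.1 h7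
    have he : c = (j + a * j₂) + a * k₂ := by
      rw [← hjz, ← hu₁, ← hu₁s]; ring
    rw [hM, he]
    exact Submodule.add_mem _
      (Ideal.mem_sup_left (Submodule.add_mem _ hj (Ideal.mul_mem_left _ a hj₂)))
      (Ideal.mem_sup_right (Ideal.mul_mem_mul (Ideal.mem_span_singleton_self a) hk₂))

end LemB
section LemA

lemma lemA (n : ℕ) : ∀ {R : Type*} [CommRing R] [IsNoetherianRing R]
    {ι : Type*} [DecidableEq ι] (x : ι → R) (u : Finset ι), u.card = n →
    MReg (u.toList.map x) →
    (∀ i ∈ u, x i ∈ Ideal.jacobson ⊥) →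
    ∀ T : Set (Finset ι), (∀ s ∈ T, s ⊆ u) →
    ∀ r : R,
    (∀ F : Finset ι, F ⊆ u → (∀ s ∈ T, (s ∩ F).Nonempty) → r ∈ Ideal.span (x '' ↑F)) →
    r ∈ mIdeal x T := by
  induction n with
  | zero =>
    intro R _ _ ι _ x u hu hreg hjac T hT r hr
    rw [Finset.card_eq_zero] at hu
    subst hu
    by_cases h0 : ∅ ∈ T
    · have h1 : (1 : R) ∈ mIdeal x T := Ideal.subset_span ⟨∅, h0, by simp⟩
      simpa using Ideal.mul_mem_left _ r h1
    · have := hr ∅ (Finset.Subset.refl _) (by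
        intro s hs
        exact absurd ((Finset.subset_empty.1 (hT s hs)) ▸ hs) h0)
      simp only [Finset.coe_empty, Set.image_empty, Ideal.span_empty, Ideal.mem_bot] at this
      rw [this]
      exact Submodule.zero_mem _
  | succ n IH =>
    intro R _ _ ι _ x u hu hreg hjac T hT r hr
    by_cases h0T : ∅ ∈ T
    · have h1 : (1 : R) ∈ mIdeal x T := Ideal.subset_span ⟨∅, h0T, by simp⟩
      simpa using Ideal.mul_mem_left _ r h1
    obtain ⟨i₀, hi₀⟩ : u.Nonempty := Finset.card_pos.1 (by omega)
    set a := x i₀ with ha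
    set u' := u.erase i₀ with hu'def
    set T₀ : Set (Finset ι) := {s ∈ T | i₀ ∉ s} with hT₀def
    set T₁ : Set (Finset ι) := (fun s => s.erase i₀) '' {s ∈ T | i₀ ∈ s} with hT₁def
    have hM : mIdeal x T = mIdeal x T₀ ⊔ Ideal.span {a} * mIdeal x T₁ :=
      mIdeal_decomp x i₀ T
    have hT₀ : ∀ s ∈ T₀, s ⊆ u' := fun s hs => Finset.subset_erase.2 ⟨hT s hs.1, hs.2⟩
    have hT₁ : ∀ s ∈ T₁, s ⊆ u' := by
      rintro - ⟨s, ⟨hsT, _⟩, rfl⟩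
      exact Finset.erase_subset_erase i₀ (hT s hsT)
    have hu' : u'.card = n := by
      rw [hu'def, Finset.card_erase_of_mem hi₀, hu]; rfl
    have hjac' : ∀ i ∈ u', x i ∈ Ideal.jacobson ⊥ :=
      fun i hi => hjac i (Finset.mem_of_mem_erase hi)
    have hjl : ∀ ρ ∈ u.toList.map x, ρ ∈ Ideal.jacobson (⊥ : Ideal R) := jac_list' hjac
    have hp0 : (u.toList.map x).Perm (a :: u'.toList.map x) := map_toList_perm x u hi₀
    have hreg1 : MReg (a :: u'.toList.map x) := hreg.perm hp0 hjl
    have hrega : MReg (u'.toList.map x ++ [a]) :=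
      hreg.perm (hp0.trans (List.perm_append_singleton a _).symm) hjl
    have hregx' : MReg (u'.toList.map x) := hrega.prefix
    -- quotient ring step
    set mk := Ideal.Quotient.mk (Ideal.span {a}) with hmkdef
    have hq' : MReg (u'.toList.map (fun i => mk (x i))) := by
      have := MReg.quot (l₁ := [a]) (l₂ := u'.toList.map x)
        (Ideal.ofList_singleton a).symm hreg1
      simpa [List.map_map, Function.comp_def] using this
    have hrq : ∀ G : Finset ι, G ⊆ u' → (∀ s ∈ T₀, (s ∩ G).Nonempty) →
        mk r ∈ Ideal.span ((fun i => mk (x i)) '' ↑G) := by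
      intro G hG hcov
      have h1 : r ∈ Ideal.span (x '' ↑(insert i₀ G)) := by
        refine hr (insert i₀ G)
          (Finset.insert_subset hi₀ (hG.trans (Finset.erase_subset i₀ u))) ?_
        intro s hs
        by_cases his : i₀ ∈ s
        · exact ⟨i₀, Finset.mem_inter.2 ⟨his, Finset.mem_insert_self _ _⟩⟩
        · obtain ⟨j, hj⟩ := hcov s ⟨hs, his⟩
          rw [Finset.mem_inter] at hj
          exact ⟨j, Finset.mem_inter.2 ⟨hj.1, Finset.mem_insert_of_mem hj.2⟩⟩
      rw [Finset.coe_insert, Set.image_insert_eq, Ideal.span_insert] at h1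
      have h2 : mk r ∈ Ideal.map mk (Ideal.span {a} ⊔ Ideal.span (x '' ↑G)) :=
        Ideal.mem_map_of_mem _ h1
      rw [Ideal.map_sup, Ideal.map_quotient_self, bot_sup_eq, Ideal.map_span] at h2
      have h3 : mk '' (x '' ↑G) = (fun i => mk (x i)) '' ↑G := Set.image_image _ _ _
      rw [h3] at h2
      exact h2
    have hcq2 := IH (fun i => mk (x i)) u' hu' hq'
      (fun i hi => jac_quot (hjac' i hi)) T₀ hT₀ (mk r) hrq
    rw [← mIdeal_map mk, Ideal.mem_quotient_iff_mem_sup] at hcq2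
    obtain ⟨j, hj, z, hz, hjz⟩ := Submodule.mem_sup.1 hcq2
    obtain ⟨u₁, hu₁⟩ := Ideal.mem_span_singleton'.1 hz
    by_cases h01 : ∅ ∈ T₁
    · -- then a itself is in the monomial ideal
      obtain ⟨s, ⟨hsT, his⟩, hse⟩ := h01
      have hs : s = {i₀} := by
        rcases (Finset.erase_eq_empty_iff s i₀).1 hse with h | h
        · exact absurd (h ▸ his) (Finset.notMem_empty i₀)
        · exact h
      have haM : a ∈ mIdeal x T := by
        have h9 : (∏ i ∈ s, x i) ∈ mIdeal x T :=
          Ideal.subset_span (Set.mem_image_of_mem (fun s => ∏ i ∈ s, x i) hsT)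
        rw [hs, Finset.prod_singleton] at h9
        exact h9
      have he : r = j + u₁ * a := by rw [← hjz, ← hu₁]
      rw [he]
      exact Submodule.add_mem _ (mIdeal_mono x (fun s hs => hs.1) hj)
        (Ideal.mul_mem_left _ u₁ haM)
    · -- main route
      have hsub : ∀ s ∈ T₀ ∪ T₁, s ⊆ u' := fun s hs => hs.elim (hT₀ s) (hT₁ s)
      have h6 : r ∈ mIdeal x (T₀ ∪ T₁) := by
        refine IH x u' hu' hregx' hjac' (T₀ ∪ T₁) hsub r ?_
        intro G hG hcov
        refine hr G (hG.trans (Finset.erase_subset i₀ u)) ?_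
        intro s hsT
        by_cases his : i₀ ∈ s
        · obtain ⟨j', hj'⟩ := hcov (s.erase i₀) (Or.inr ⟨s, ⟨hsT, his⟩, rfl⟩)
          rw [Finset.mem_inter] at hj'
          exact ⟨j', Finset.mem_inter.2 ⟨Finset.mem_of_mem_erase hj'.1, hj'.2⟩⟩
        · exact hcov s (Or.inl ⟨hsT, his⟩)
      have h7 : a * u₁ ∈ mIdeal x (T₀ ∪ T₁) := by
        have he : a * u₁ = r - j := by rw [← hjz, ← hu₁]; ring
        rw [he]
        exact Submodule.sub_mem _ h6
          (mIdeal_mono x Set.subset_union_left hj)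
      have h8 : u₁ ∈ mIdeal x (T₀ ∪ T₁) :=
        lemB n x u' hu' a hrega hjac' (hjac i₀ hi₀) (T₀ ∪ T₁) hsub u₁ h7
      rw [mIdeal_union] at h8
      obtain ⟨j₂, hj₂, k₂, hk₂, hu₁s⟩ := Submodule.mem_sup.1 h8
      have he : r = (j + a * j₂) + a * k₂ := by rw [← hjz, ← hu₁, ← hu₁s]; ring
      rw [hM, he]
      exact Submodule.add_mem _
        (Ideal.mem_sup_left (Submodule.add_mem _ hj (Ideal.mul_mem_left _ a hj₂)))
        (Ideal.mem_sup_right (Ideal.mul_mem_mul (Ideal.mem_span_singleton_self a) hk₂))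

end LemA
section Domain
variable {R : Type*} [CommRing R]

lemma isDomain_of_bot_prime {A : Type*} [CommRing A] (h : (⊥ : Ideal A).IsPrime) :
    IsDomain A := by
  haveI : Nontrivial A := by
    refine ⟨1, 0, fun h10 => h.ne_top ?_⟩
    rw [Ideal.eq_top_iff_one, h10]
    exact Submodule.zero_mem _
  haveI : NoZeroDivisors A := by
    constructor
    intro a b hab
    have hmem : a * b ∈ (⊥ : Ideal A) := by rw [Ideal.mem_bot]; exact hab
    rcases h.mem_or_mem hmem with h' | h' <;> rw [Ideal.mem_bot] at h'
    · exact Or.inl h'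
    · exact Or.inr h'
  exact NoZeroDivisors.to_isDomain A

lemma pow_regular {a : R} (hreg : ∀ r : R, a * r = 0 → r = 0) :
    ∀ (k : ℕ) (r : R), a ^ k * r = 0 → r = 0 := by
  intro k
  induction k with
  | zero => intro r h; simpa using h
  | succ k ih =>
    intro r h
    rw [pow_succ, mul_assoc] at h
    exact hreg r (ih _ h)

lemma bot_prime_of_span_singleton_prime [IsNoetherianRing R] {a : R}
    (ha : a ∈ Ideal.jacobson (⊥ : Ideal R)) (hreg : ∀ r : R, a * r = 0 → r = 0)
    (hp : (Ideal.span {a}).IsPrime) : (⊥ : Ideal R).IsPrime := by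
  classical
  have key : ∀ z : R, z ≠ 0 → ∃ (m : ℕ) (w : R), z = a ^ m * w ∧ w ∉ Ideal.span {a} := by
    intro z hz
    have hnotall : ¬ ∀ n : ℕ, z ∈ Ideal.span {a} ^ n := by
      intro hall
      apply hz
      have hzi : z ∈ (⨅ i : ℕ, (Ideal.span {a}) ^ i • ⊤ : Submodule R R) := by
        rw [Submodule.mem_iInf]
        intro i
        rw [smul_top_eq_self]
        exact hall i
      obtain ⟨⟨ρ, hρ⟩, hρz⟩ := (Ideal.mem_iInf_smul_pow_eq_bot_iff (Ideal.span {a}) z).mp hzi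
      have hρj : ρ ∈ Ideal.jacobson (⊥ : Ideal R) := by
        have hle : Ideal.span {a} ≤ Ideal.jacobson ⊥ := by
          rw [Ideal.span_le, Set.singleton_subset_iff]
          exact ha
        exact hle hρ
      have hunit : IsUnit (1 - ρ) := by
        have := Ideal.mem_jacobson_bot.1 hρj (-1)
        rwa [mul_neg_one, neg_add_eq_sub] at this
      have h0 : (1 - ρ) * z = 0 := by
        have hsz : ρ * z = z := by rw [← smul_eq_mul]; exact hρz
        rw [sub_mul, one_mul, hsz, sub_self]
      obtain ⟨v, hv⟩ := hunit.exists_left_inv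
      calc z = v * ((1 - ρ) * z) := by rw [← mul_assoc, hv, one_mul]
      _ = 0 := by rw [h0, mul_zero]
    have hex : ∃ n, z ∉ Ideal.span {a} ^ n := not_forall.1 hnotall
    set n₀ := Nat.find hex with hn₀def
    have hn₀ : z ∉ Ideal.span {a} ^ n₀ := Nat.find_spec hex
    have hn₀pos : n₀ ≠ 0 := by
      intro h
      apply hn₀
      rw [h, pow_zero, Ideal.one_eq_top]
      exact Submodule.mem_top
    have hmem : z ∈ Ideal.span {a} ^ (n₀ - 1) := by
      by_contra hcon
      exact Nat.find_min hex (by omega) hcon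
    rw [Ideal.span_singleton_pow, Ideal.mem_span_singleton] at hmem
    obtain ⟨w, hw⟩ := hmem
    refine ⟨n₀ - 1, w, hw, fun hwmem => ?_⟩
    rw [Ideal.mem_span_singleton] at hwmem
    obtain ⟨w', hw'⟩ := hwmem
    apply hn₀
    rw [Ideal.span_singleton_pow, Ideal.mem_span_singleton]
    refine ⟨w', ?_⟩
    rw [hw, hw', ← mul_assoc, ← pow_succ]
    congr 2
    omega
  refine ⟨?_, ?_⟩
  · intro hbot
    apply hp.ne_top
    rw [eq_top_iff, ← hbot]
    exact bot_le
  · intro b c hbc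
    rw [Ideal.mem_bot] at hbc
    by_contra hcon
    push_neg at hcon
    obtain ⟨hb, hc⟩ := hcon
    rw [Ideal.mem_bot] at hb hc
    obtain ⟨mb, b', hb', hbn⟩ := key b hb
    obtain ⟨mc, c', hc', hcn⟩ := key c hc
    have h0 : a ^ (mb + mc) * (b' * c') = 0 := by
      calc a ^ (mb + mc) * (b' * c') = (a ^ mb * b') * (a ^ mc * c') := by
            rw [pow_add]; ring
      _ = b * c := by rw [← hb', ← hc']
      _ = 0 := hbc
    have h1 : b' * c' = 0 := pow_regular hreg _ _ h0
    have h2 : b' * c' ∈ Ideal.span {a} := by rw [h1]; exact Submodule.zero_mem _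
    rcases hp.mem_or_mem h2 with h | h
    · exact hbn h
    · exact hcn h

end Domain
section LemCD

lemma lemD (n : ℕ) : ∀ {R : Type*} [CommRing R] [IsNoetherianRing R] (l : List R),
    l.length = n → MReg l → (∀ r ∈ l, r ∈ Ideal.jacobson ⊥) →
    (Ideal.ofList l).IsPrime → (⊥ : Ideal R).IsPrime := by
  induction n with
  | zero =>
    intro R _ _ l hl hreg hjac hp
    rw [List.length_eq_zero_iff] at hl
    subst hl
    rwa [Ideal.ofList_nil] at hp
  | succ n IH =>
    intro R _ _ l hl hreg hjac hp
    obtain ⟨a, l', rfl⟩ : ∃ a l', l = a :: l' := by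
      cases l with
      | nil => simp at hl
      | cons a l' => exact ⟨a, l', rfl⟩
    set mkq := Ideal.Quotient.mk (Ideal.span {a}) with hmk
    have haj : a ∈ Ideal.jacobson (⊥ : Ideal R) := hjac a List.mem_cons_self
    have hregq : MReg (l'.map mkq) :=
      MReg.quot (l₁ := [a]) (Ideal.ofList_singleton a).symm hreg
    have hjacq : ∀ r ∈ l'.map mkq, r ∈ Ideal.jacobson ⊥ := by
      intro r hr
      obtain ⟨s, hs, rfl⟩ := List.mem_map.1 hr
      exact jac_quot (hjac s (List.mem_cons_of_mem a hs))
    have hker : RingHom.ker mkq ≤ Ideal.ofList (a :: l') := by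
      rw [hmk, Ideal.mk_ker, Ideal.ofList_cons]
      exact le_sup_left
    haveI := hp
    haveI hp2 : (Ideal.map mkq (Ideal.ofList (a :: l'))).IsPrime :=
      Ideal.map_isPrime_of_surjective Ideal.Quotient.mk_surjective hker
    have hmapeq : Ideal.map mkq (Ideal.ofList (a :: l')) = Ideal.ofList (l'.map mkq) := by
      rw [Ideal.ofList_cons, Ideal.map_sup, hmk, Ideal.map_quotient_self, bot_sup_eq,
        Ideal.map_ofList]
    rw [hmapeq] at hp2
    have hbotq : (⊥ : Ideal (R ⧸ Ideal.span {a})).IsPrime :=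
      IH (l'.map mkq) (by simp only [List.map_map, List.length_map]; simpa using hl) hregq hjacq hp2
    have hspan : (Ideal.span {a}).IsPrime :=
      (Ideal.Quotient.isDomain_iff_prime _).1 (isDomain_of_bot_prime hbotq)
    exact bot_prime_of_span_singleton_prime haj (fun r h => MReg.head hreg h) hspan

lemma lemC {R : Type*} [CommRing R] [IsNoetherianRing R] {ι : Type*} [DecidableEq ι]
    (x : ι → R) (u F : Finset ι) (hF : F ⊆ u)
    (hreg : MReg (u.toList.map x)) (hjac : ∀ i ∈ u, x i ∈ Ideal.jacobson ⊥)
    (hp : (Ideal.span (x '' ↑u)).IsPrime) : (Ideal.span (x '' ↑F)).IsPrime := by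
  have hperm : (u.toList.map x).Perm (F.toList.map x ++ (u \ F).toList.map x) := by
    have h := (toList_perm_sdiff u F hF).map x
    simpa using h
  have hreg2 : MReg (F.toList.map x ++ (u \ F).toList.map x) :=
    hreg.perm hperm (jac_list' hjac)
  set mkq := Ideal.Quotient.mk (Ideal.span (x '' ↑F)) with hmk
  have hofl : Ideal.ofList (F.toList.map x) = Ideal.span (x '' ↑F) := ofList_toList_map x F
  have hregq : MReg (((u \ F).toList.map x).map mkq) := MReg.quot hofl.symm hreg2
  have hjacq : ∀ r ∈ ((u \ F).toList.map x).map mkq, r ∈ Ideal.jacobson ⊥ := by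
    intro r hr
    obtain ⟨s, hs, rfl⟩ := List.mem_map.1 hr
    obtain ⟨i, hi, rfl⟩ := List.mem_map.1 hs
    exact jac_quot (hjac i (Finset.mem_sdiff.1 (Finset.mem_toList.1 hi)).1)
  have hsplit : Ideal.span (x '' ↑u) = Ideal.span (x '' ↑F) ⊔ Ideal.span (x '' ↑(u \ F)) := by
    rw [← Ideal.span_union, ← Set.image_union, ← Finset.coe_union,
      Finset.union_sdiff_of_subset hF]
  have hker : RingHom.ker mkq ≤ Ideal.span (x '' ↑u) := by
    rw [hmk, Ideal.mk_ker, hsplit]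
    exact le_sup_left
  haveI := hp
  haveI hp2 : (Ideal.map mkq (Ideal.span (x '' ↑u))).IsPrime :=
    Ideal.map_isPrime_of_surjective Ideal.Quotient.mk_surjective hker
  have hmapeq : Ideal.map mkq (Ideal.span (x '' ↑u)) =
      Ideal.ofList (((u \ F).toList.map x).map mkq) := by
    rw [hsplit, Ideal.map_sup, hmk, Ideal.map_quotient_self, bot_sup_eq,
      ← ofList_toList_map x (u \ F), Ideal.map_ofList]
  rw [hmapeq] at hp2
  have hbotq := lemD (((u \ F).toList.map x).map mkq).length _ rfl hregq hjacq hp2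
  exact (Ideal.Quotient.isDomain_iff_prime _).1 (isDomain_of_bot_prime hbotq)

end LemCD
theorem stmt_11 {R : Type*} [CommRing R] [IsNoetherianRing R] {d : ℕ} (x : Fin d → R)
    (hreg : RingTheory.Sequence.IsRegular R (List.ofFn x))
    (hjac : ∀ i, x i ∈ Ideal.jacobson (⊥ : Ideal R))
    (hprime : (Ideal.span (Set.range x)).IsPrime)
    (I : Ideal R) (hIproper : I ≠ ⊤)
    (hsf : ∃ T : Set (Finset (Fin d)), I = Ideal.span ((fun s => ∏ i ∈ s, x i) '' T)) :
    I = sInf I.minimalPrimes := by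
  obtain ⟨T, rfl⟩ := hsf
  set u : Finset (Fin d) := Finset.univ with hu
  have hjl : ∀ r ∈ List.ofFn x, r ∈ Ideal.jacobson (⊥ : Ideal R) := by
    intro r hr
    obtain ⟨i, rfl⟩ := List.mem_ofFn.1 hr
    exact hjac i
  have hreg' : MReg (u.toList.map x) := by
    have h0 : MReg (List.ofFn x) := (mreg_iff_isWeaklyRegular _).2 hreg.toIsWeaklyRegular
    refine h0.perm ?_ hjl
    have h1 : List.ofFn x = (List.finRange d).map x := List.ofFn_eq_map
    rw [h1]
    refine List.Perm.map x ?_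
    rw [← Multiset.coe_eq_coe, Finset.coe_toList]
    rfl
  have hjac' : ∀ i ∈ u, x i ∈ Ideal.jacobson (⊥ : Ideal R) := fun i _ => hjac i
  have hprime' : (Ideal.span (x '' ↑u)).IsPrime := by rwa [hu, Finset.coe_univ, Set.image_univ]
  have hT : ∀ s ∈ T, s ⊆ u := fun s _ => Finset.subset_univ s
  refine le_antisymm (le_sInf ?_) ?_
  · rintro p hp
    exact hp.1.2
  · rw [Ideal.sInf_minimalPrimes]
    intro r hr
    refine lemA d x u (by simp [hu]) hreg' hjac' T hT r ?_
    intro F hFu hcov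
    have hPF : (Ideal.span (x '' ↑F)).IsPrime := lemC x u F hFu hreg' hjac' hprime'
    have hIP : Ideal.span ((fun s => ∏ i ∈ s, x i) '' T) ≤ Ideal.span (x '' ↑F) := by
      refine Ideal.span_le.2 ?_
      rintro - ⟨s, hs, rfl⟩
      obtain ⟨i, hi⟩ := hcov s hs
      rw [Finset.mem_inter] at hi
      have hxi : x i ∈ Ideal.span (x '' ↑F) := Ideal.subset_span ⟨i, hi.2, rfl⟩
      obtain ⟨t, ht⟩ := Finset.dvd_prod_of_mem x hi.1
      dsimp only
      rw [ht]
      exact Ideal.mul_mem_right _ _ hxi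
    have h2 := Ideal.radical_mono hIP hr
    rwa [hPF.radical] at h2
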